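/- Let u, v be harmonic functions on a Riemannian manifold M³ and e a unit vector field such that e(v) = v² − u² − 1 and e(u) = 2uv pointwise. Then the function w = u² + v² − 1 satisfies Δw ≥ 2w² pointwise. -/

import Mathlib

/-- Pointwise Bochner-type estimate: let `u, v` be harmonic functions on a
Riemannian manifold `M` (gradients `gradu, gradv` with values in the tangent
spaces, modelled by an inner product space `E`, Laplacians `lapu = lapv = 0`),
and let `e` be a unit vector field with `e(v) = v² - u² - 1` and `e(u) = 2uv`.
Then `w = u² + v² - 1` satisfies `Δw ≥ 2w²`, where
`Δw = 2u·Δu + 2‖∇u‖² + 2v·Δv + 2‖∇v‖²`. -/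
theorem stmt_8 {M : Type*} {E : Type*} [NormedAddCommGroup E] [InnerProductSpace ℝ E]
    (u v : M → ℝ) (gradu gradv : M → E) (e : M → E)
    (lapu lapv lapw : M → ℝ)
    (he : ∀ x, ‖e x‖ = 1)
    (hharmu : ∀ x, lapu x = 0) (hharmv : ∀ x, lapv x = 0)
    (hev : ∀ x, (inner ℝ (gradv x) (e x) : ℝ) = (v x) ^ 2 - (u x) ^ 2 - 1)
    (heu : ∀ x, (inner ℝ (gradu x) (e x) : ℝ) = 2 * u x * v x)
    (hlapw : ∀ x, lapw x =
      2 * u x * lapu x + 2 * ‖gradu x‖ ^ 2 + 2 * v x * lapv x + 2 * ‖gradv x‖ ^ 2) :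
    ∀ x, lapw x ≥ 2 * ((u x) ^ 2 + (v x) ^ 2 - 1) ^ 2 := by
  intro x
  have h1 : |(inner ℝ (gradu x) (e x) : ℝ)| ≤ ‖gradu x‖ := by
    simpa [he x] using abs_real_inner_le_norm (gradu x) (e x)
  have h2 : |(inner ℝ (gradv x) (e x) : ℝ)| ≤ ‖gradv x‖ := by
    simpa [he x] using abs_real_inner_le_norm (gradv x) (e x)
  have h1' : (2 * u x * v x) ^ 2 ≤ ‖gradu x‖ ^ 2 := by
    rw [← heu x]
    calc _ = |(inner ℝ (gradu x) (e x) : ℝ)| ^ 2 := (sq_abs _).symm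
    _ ≤ _ := by gcongr
  have h2' : ((v x) ^ 2 - (u x) ^ 2 - 1) ^ 2 ≤ ‖gradv x‖ ^ 2 := by
    rw [← hev x]
    calc _ = |(inner ℝ (gradv x) (e x) : ℝ)| ^ 2 := (sq_abs _).symm
    _ ≤ _ := by gcongr
  rw [hlapw x, hharmu x, hharmv x]
  nlinarith [sq_nonneg (u x), sq_nonneg (v x), sq_nonneg (u x * v x)]
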